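/- Let G be a color-looped graph with n vertices, m edges and c loops with m + c = 2n. Then the matrix M^c_{2,0,2}(G) has rank 2n over the rational function field ℝ(a_e, b_e : e edge) if and only if G is color-looped-(2,2). -/

import Mathlib

/-!
STATEMENT 18: the specialized matrix M^c_{2,0,2}(G) represents the color-looped-(2,2)
property.
Let G be a color-looped graph with n vertices, m edges and c loops with m + c = 2n.
Then M^c_{2,0,2}(G) has rank 2n over the rational function field ℝ(a_e, b_e : e edge)
iff G is color-looped-(2,2).
-/

open MvPolynomial

/-- A looped graph. -/
structure LGraph (V E L : Type) where
  ends : E → V × V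
  ne : ∀ e, (ends e).1 ≠ (ends e).2
  loopAt : L → V

namespace LGraph

variable {V E L : Type}

noncomputable def edgeCount (G : LGraph V E L) (S : Finset V) : ℕ :=
  Nat.card {e : E // (G.ends e).1 ∈ S ∧ (G.ends e).2 ∈ S}

noncomputable def loopCount (G : LGraph V E L) (S : Finset V) : ℕ :=
  Nat.card {l : L // G.loopAt l ∈ S}

/-- A looped-(2,2) graph. -/
def IsLooped22 (G : LGraph V E L) [Fintype V] [Fintype E] [Fintype L] : Prop :=
  (∀ S : Finset V, G.edgeCount S ≤ 2 * S.card - 2) ∧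
  (∀ S : Finset V, G.edgeCount S + G.loopCount S ≤ 2 * S.card) ∧
  Fintype.card E + Fintype.card L = 2 * Fintype.card V

/-- The simple graph on `V` underlying the edges of `G` satisfying `P`. -/
def subSG (G : LGraph V E L) (P : E → Prop) : SimpleGraph V :=
  SimpleGraph.fromRel fun u v => ∃ e, P e ∧ G.ends e = (u, v)

/-- The edges satisfying `P` and the loops satisfying `Q` form a spanning looped
forest. -/
def IsLoopedForestOn (G : LGraph V E L) (P : E → Prop) (Q : L → Prop) : Prop :=
  (∀ e f, P e → P f →
      s((G.ends e).1, (G.ends e).2) = s((G.ends f).1, (G.ends f).2) → e = f) ∧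
  (G.subSG P).IsAcyclic ∧
  ∀ comp : (G.subSG P).ConnectedComponent,
    Nat.card {l : L // Q l ∧ (G.subSG P).connectedComponentMk (G.loopAt l) = comp} = 1

/-- A color-looped graph (loops colored by `color`: `true` = red, `false` = blue) is
color-looped-(2,2) if it is looped-(2,2) and its edges can be partitioned into a red
forest and a blue forest such that each monochromatic tree spans exactly one loop of its
color. -/
def IsColorLooped22 (G : LGraph V E L) (color : L → Bool)
    [Fintype V] [Fintype E] [Fintype L] : Prop :=
  G.IsLooped22 ∧
  ∃ ecol : E → Bool, ∀ b : Bool,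
    G.IsLoopedForestOn (fun e => ecol e = b) (fun l => color l = b)

end LGraph

/-- The rational function field `ℝ(a_e, b_e : e ∈ E)`; `Sum.inl e` is `a_e`, `Sum.inr e`
is `b_e`. -/
abbrev EdgeField (E : Type) := FractionRing (MvPolynomial (E ⊕ E) ℝ)

noncomputable def edgeVar (E : Type) (v : E ⊕ E) : EdgeField E :=
  algebraMap (MvPolynomial (E ⊕ E) ℝ) (EdgeField E) (X v)

/-- The specialized matrix `M^c_{2,0,2}(G)`: the row of edge `e = ij` has entries
`a_e, b_e` in the two columns of vertex `i`, entries `−a_e, −b_e` in the two columns of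
vertex `j`, and zeros elsewhere; the row of a red loop on vertex `i` has entry `1` in
the `x`-column of `i`, the row of a blue loop on vertex `i` has entry `1` in the
`y`-column of `i`, and zeros elsewhere. -/
noncomputable def M202c {V E L : Type} [DecidableEq V]
    (G : LGraph V E L) (color : L → Bool) :
    Matrix (E ⊕ L) (V ⊕ V) (EdgeField E) := fun row col =>
  match row with
  | Sum.inl e =>
      match col with
      | Sum.inl v =>
          if v = (G.ends e).1 then edgeVar E (Sum.inl e)
          else if v = (G.ends e).2 then -edgeVar E (Sum.inl e) else 0
      | Sum.inr v =>
          if v = (G.ends e).1 then edgeVar E (Sum.inr e)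
          else if v = (G.ends e).2 then -edgeVar E (Sum.inr e) else 0
  | Sum.inr l =>
      match col with
      | Sum.inl v => if v = G.loopAt l ∧ color l = true then 1 else 0
      | Sum.inr v => if v = G.loopAt l ∧ color l = false then 1 else 0

namespace M202Aux
set_option linter.unusedSectionVars false

open Matrix LGraph

variable {V E L : Type} [Fintype V] [Fintype E] [Fintype L] [DecidableEq V]

/-- The polynomial ring `ℝ[a_e, b_e]`. -/
abbrev Rg (E : Type) := MvPolynomial (E ⊕ E) ℝ

/-- indicator vector of a vertex -/
def chi (v0 : V) : V → ℝ := fun v => if v = v0 then 1 else 0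

/-- incidence vector of an edge -/
def uvec (G : LGraph V E L) (e : E) : V → ℝ :=
  fun v => if v = (G.ends e).1 then 1 else if v = (G.ends e).2 then -1 else 0

/-- place a vector in the `x`-block (`b = true`) or the `y`-block (`b = false`) -/
def blockify (b : Bool) (y : V → ℝ) : V ⊕ V → ℝ :=
  fun c => match c with
  | Sum.inl v => if b then y v else 0
  | Sum.inr v => if b then 0 else y v

/-- `blockify` as a linear map -/
def blockifyL (b : Bool) : (V → ℝ) →ₗ[ℝ] (V ⊕ V → ℝ) where
  toFun := blockify b
  map_add' y z := by funext c; cases c <;> cases b <;> simp [blockify]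
  map_smul' t y := by funext c; cases c <;> cases b <;> simp [blockify]

def loopRow (G : LGraph V E L) (color : L → Bool) (l : L) : V ⊕ V → ℝ :=
  blockify (color l) (chi (G.loopAt l))

/-- the rows of the real matrix attached to a full edge 2-coloring `g` -/
def row0 (G : LGraph V E L) (color : L → Bool) (g : E → Bool) : E ⊕ L → V ⊕ V → ℝ
  | Sum.inl e => blockify (g e) (uvec G e)
  | Sum.inr l => loopRow G color l

/-- the real matrix attached to a full edge 2-coloring `g` -/
def N0 (G : LGraph V E L) (color : L → Bool) (g : E → Bool) :
    Matrix (E ⊕ L) (V ⊕ V) ℝ := Matrix.of (row0 G color g)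

/-- the polynomial matrix attached to a partial edge 2-coloring `f` -/
noncomputable def matP (G : LGraph V E L) (color : L → Bool) (f : E → Option Bool) :
    Matrix (E ⊕ L) (V ⊕ V) (Rg E) :=
  Matrix.of fun r c => match r with
  | Sum.inl e =>
      match f e with
      | none => MvPolynomial.X (Sum.inl e) * MvPolynomial.C (blockify true (uvec G e) c)
          + MvPolynomial.X (Sum.inr e) * MvPolynomial.C (blockify false (uvec G e) c)
      | some b => MvPolynomial.C (blockify b (uvec G e) c)
  | Sum.inr l => MvPolynomial.C (loopRow G color l c)

section SumHelpers

variable {K : Type*} [Field K]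

lemma sum_ite_pair {i j : V} (hij : i ≠ j) (p q : K) :
    (∑ v : V, (if v = i then p else if v = j then q else 0)) = p + q := by
  have : ∀ v : V, (if v = i then p else if v = j then q else 0)
      = (if v = i then p else 0) + (if v = j then q else 0) := by
    intro v
    by_cases h1 : v = i
    · subst h1; simp [hij]
    · by_cases h2 : v = j <;> simp [h1, h2, Ne.symm hij]
  simp only [this, Finset.sum_add_distrib, Finset.sum_ite_eq', Finset.mem_univ, if_true]

lemma sum_ite_pair_mul {i j : V} (hij : i ≠ j) (y : V → ℝ) :
    (∑ v : V, (if v = i then (1 : ℝ) else if v = j then -1 else 0) * y v)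
      = y i - y j := by
  have : ∀ v : V, (if v = i then (1 : ℝ) else if v = j then -1 else 0) * y v
      = (if v = i then y v else if v = j then -(y v) else 0) := by
    intro v
    by_cases h1 : v = i
    · simp [h1]
    · by_cases h2 : v = j <;> simp [h1, h2]
  rw [Finset.sum_congr rfl fun v _ => this v]
  have h2 : ∀ v : V, (if v = i then y v else if v = j then -(y v) else 0)
      = (if v = i then y i else if v = j then -(y j) else 0) := by
    intro v
    by_cases h1 : v = i
    · simp [h1]
    · by_cases h2 : v = j <;> simp [h1, h2, Ne.symm hij]
  rw [Finset.sum_congr rfl fun v _ => h2 v, sum_ite_pair hij]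
  ring

lemma sum_uvec_mul (G : LGraph V E L) (e : E) (y : V → ℝ) :
    (∑ v : V, uvec G e v * y v) = y (G.ends e).1 - y (G.ends e).2 :=
  sum_ite_pair_mul (G.ne e) y

lemma sum_chi_mul (v0 : V) (y : V → ℝ) :
    (∑ v : V, chi v0 v * y v) = y v0 := by
  have : ∀ v : V, chi v0 v * y v = if v = v0 then y v else 0 := by
    intro v; by_cases h : v = v0 <;> simp [chi, h]
  simp [this, Finset.sum_ite_eq']

/-- sum of a blockified row against a vector on `V ⊕ V` -/
lemma sum_blockify_mul (b : Bool) (y : V → ℝ) (x : V ⊕ V → ℝ) :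
    (∑ c : V ⊕ V, blockify b y c * x c)
      = ∑ v : V, y v * (if b then x (Sum.inl v) else x (Sum.inr v)) := by
  rw [Fintype.sum_sum_type]
  cases b <;> simp [blockify]

end SumHelpers

section Graph

variable (G : LGraph V E L)

lemma adj_of_edge {P : E → Prop} {e : E} (he : P e) :
    (G.subSG P).Adj (G.ends e).1 (G.ends e).2 := by
  rw [LGraph.subSG, SimpleGraph.fromRel_adj]
  exact ⟨G.ne e, Or.inl ⟨e, he, Prod.mk.eta⟩⟩

lemma adj_elim {P : E → Prop} {u w : V} (h : (G.subSG P).Adj u w) :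
    ∃ e, P e ∧ s((G.ends e).1, (G.ends e).2) = s(u, w) := by
  rw [LGraph.subSG, SimpleGraph.fromRel_adj] at h
  obtain ⟨hne, h | h⟩ := h <;> obtain ⟨e, he, hends⟩ := h
  · exact ⟨e, he, by rw [hends]⟩
  · exact ⟨e, he, by rw [hends]; exact Sym2.eq_swap⟩

lemma eq_of_reachable {P : E → Prop} {y : V → ℝ}
    (hy : ∀ e, P e → y (G.ends e).1 = y (G.ends e).2)
    {u w : V} (h : (G.subSG P).Reachable u w) : y u = y w := by
  obtain ⟨p⟩ := h
  induction p with
  | nil => rfl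
  | cons h p ih =>
    refine Eq.trans ?_ ih
    obtain ⟨e, he, hs⟩ := adj_elim G h
    rw [Sym2.eq_iff] at hs
    rcases hs with ⟨h1, h2⟩ | ⟨h1, h2⟩
    · rw [← h1, ← h2]; exact hy e he
    · rw [← h1, ← h2]; exact (hy e he).symm

lemma uvec_cases {e : E} {u w : V} (hs : s((G.ends e).1, (G.ends e).2) = s(u, w)) :
    uvec G e = (fun v => chi u v - chi w v) ∨
      uvec G e = (fun v => chi w v - chi u v) := by
  have hne := G.ne e
  rw [Sym2.eq_iff] at hs
  rcases hs with ⟨h1, h2⟩ | ⟨h1, h2⟩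
  · have huw : u ≠ w := by rw [← h1, ← h2]; exact hne
    left; funext v
    simp only [uvec, chi, h1, h2]
    by_cases hv1 : v = u
    · subst hv1; simp [huw]
    · by_cases hv2 : v = w <;> simp [hv1, hv2, Ne.symm huw]
  · have huw : w ≠ u := by rw [← h1, ← h2]; exact hne
    right; funext v
    simp only [uvec, chi, h1, h2]
    by_cases hv1 : v = w
    · subst hv1; simp [huw]
    · by_cases hv2 : v = u <;> simp [hv1, hv2, Ne.symm huw]

lemma walkSpan {P : E → Prop} {u w : V} (p : (G.subSG P).Walk u w) :
    (fun v => chi u v - chi w v) ∈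
      Submodule.span ℝ (uvec G '' {e | P e ∧ s((G.ends e).1, (G.ends e).2) ∈ p.edges}) := by
  induction p with
  | nil =>
    simp only [sub_self]
    exact Submodule.zero_mem _
  | @cons u x w h p ih =>
    have hsplit : (fun v => chi u v - chi w v)
        = (fun v => chi u v - chi x v) + (fun v => chi x v - chi w v) := by
      funext v; simp only [Pi.add_apply]; ring
    rw [hsplit]
    have hmono : Submodule.span ℝ (uvec G '' {e | P e ∧ s((G.ends e).1, (G.ends e).2) ∈ p.edges})
        ≤ Submodule.span ℝ
          (uvec G '' {e | P e ∧ s((G.ends e).1, (G.ends e).2) ∈ (SimpleGraph.Walk.cons h p).edges}) := by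
      apply Submodule.span_mono
      apply Set.image_mono
      intro e ⟨he, hmem⟩
      exact ⟨he, by rw [SimpleGraph.Walk.edges_cons]; exact List.mem_cons_of_mem _ hmem⟩
    refine Submodule.add_mem _ ?_ (hmono ih)
    obtain ⟨e, he, hs⟩ := adj_elim G h
    have hememe : uvec G e ∈ uvec G ''
        {e | P e ∧ s((G.ends e).1, (G.ends e).2) ∈ (SimpleGraph.Walk.cons h p).edges} := by
      refine Set.mem_image_of_mem _ ⟨he, ?_⟩
      rw [SimpleGraph.Walk.edges_cons, hs]
      exact List.mem_cons_self
    rcases uvec_cases G hs with hc | hc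
    · exact hc ▸ Submodule.subset_span hememe
    · have : (fun v => chi u v - chi x v) = -uvec G e := by rw [hc]; funext v; simp
      rw [this]
      exact Submodule.neg_mem _ (Submodule.subset_span hememe)

end Graph

section RealMatrix

variable (G : LGraph V E L) (color : L → Bool)

lemma row0_inl (g : E → Bool) (e : E) :
    row0 G color g (Sum.inl e) = blockify (g e) (uvec G e) := rfl

lemma row0_inr (g : E → Bool) (l : L) :
    row0 G color g (Sum.inr l) = blockify (color l) (chi (G.loopAt l)) := rfl

lemma sum_blockify_blockify (b1 b2 : Bool) (y z : V → ℝ) :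
    (∑ c : V ⊕ V, blockify b1 y c * blockify b2 z c)
      = if b1 = b2 then ∑ v : V, y v * z v else 0 := by
  rw [Fintype.sum_sum_type]
  cases b1 <;> cases b2 <;> simp [blockify]

lemma submatrix_mulVec_eq_zero_iff (σ : (V ⊕ V) ≃ (E ⊕ L))
    (A : Matrix (E ⊕ L) (V ⊕ V) ℝ) (x : V ⊕ V → ℝ) :
    (A.submatrix σ id).mulVec x = 0 ↔ ∀ r : E ⊕ L, (∑ c : V ⊕ V, A r c * x c) = 0 := by
  constructor
  · intro h r
    have := congr_fun h (σ.symm r)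
    simpa [Matrix.mulVec, dotProduct, Matrix.submatrix_apply] using this
  · intro h
    funext i
    simpa [Matrix.mulVec, dotProduct, Matrix.submatrix_apply] using h (σ i)

/-- If each color class is a spanning looped forest, the real matrix is nonsingular. -/
lemma det_N0_ne_zero_of_forests (σ : (V ⊕ V) ≃ (E ⊕ L)) (g : E → Bool)
    (hf : ∀ b : Bool, G.IsLoopedForestOn (fun e => g e = b) (fun l => color l = b)) :
    Matrix.det ((N0 G color g).submatrix σ id) ≠ 0 := by
  rw [Ne, ← Matrix.exists_mulVec_eq_zero_iff]
  rintro ⟨x, hx0, hx⟩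
  rw [submatrix_mulVec_eq_zero_iff] at hx
  set xs : Bool → V → ℝ := fun b v => if b then x (Sum.inl v) else x (Sum.inr v) with hxs
  have hedge : ∀ e : E, xs (g e) (G.ends e).1 = xs (g e) (G.ends e).2 := by
    intro e
    have h : (∑ c : V ⊕ V, blockify (g e) (uvec G e) c * x c) = 0 := hx (Sum.inl e)
    rw [sum_blockify_mul] at h
    have h2 : xs (g e) (G.ends e).1 - xs (g e) (G.ends e).2 = 0 := by
      rw [← sum_uvec_mul G e (xs (g e))]; exact h
    linarith [h2]
  have hloop : ∀ l : L, xs (color l) (G.loopAt l) = 0 := by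
    intro l
    have h : (∑ c : V ⊕ V, blockify (color l) (chi (G.loopAt l)) c * x c) = 0 :=
      hx (Sum.inr l)
    rw [sum_blockify_mul] at h
    rw [← sum_chi_mul (G.loopAt l) (xs (color l))]
    exact h
  have hzero : ∀ (b : Bool) (v : V), xs b v = 0 := by
    intro b v
    obtain ⟨hone⟩ := hf b
    obtain ⟨l0, -⟩ := Nat.card_eq_one_iff_exists.mp
      ((hf b).2.2 ((G.subSG fun e => g e = b).connectedComponentMk v))
    obtain ⟨hcol, hcomp⟩ := l0.2
    have hreach : (G.subSG fun e => g e = b).Reachable v (G.loopAt l0.1) :=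
      (SimpleGraph.ConnectedComponent.exact hcomp).symm
    have hconst : xs b v = xs b (G.loopAt l0.1) := by
      refine eq_of_reachable G (P := fun e => g e = b) ?_ hreach
      intro e he
      have := hedge e
      rwa [he] at this
    rw [hconst]
    have hl := hloop l0.1
    rwa [hcol] at hl
  apply hx0
  funext c
  cases c with
  | inl v => exact hzero true v
  | inr v => exact hzero false v

lemma uvec_chi (e : E) :
    uvec G e = fun v => chi (G.ends e).1 v - chi (G.ends e).2 v := by
  have hne := G.ne e
  funext v
  simp only [uvec, chi]
  by_cases h1 : v = (G.ends e).1
  · subst h1; simp [hne]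
  · by_cases h2 : v = (G.ends e).2 <;> simp [h1, h2, Ne.symm hne]

lemma blockify_neg (b : Bool) (y : V → ℝ) :
    blockify b (-y) = -(blockify b y) :=
  (blockifyL (V := V) b).map_neg y

lemma blockify_walk_span (g : E → Bool) (b : Bool) {u w : V}
    (p : (G.subSG fun e => g e = b).Walk u w) (T : Set (E ⊕ L))
    (hT : ∀ e, g e = b → s((G.ends e).1, (G.ends e).2) ∈ p.edges → Sum.inl e ∈ T) :
    blockifyL b (fun v => chi u v - chi w v)
      ∈ Submodule.span ℝ (row0 G color g '' T) := by
  have h1 := walkSpan G p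
  have h2 : blockifyL (V := V) b (fun v => chi u v - chi w v)
      ∈ Submodule.map (blockifyL b)
        (Submodule.span ℝ (uvec G ''
          {e | g e = b ∧ s((G.ends e).1, (G.ends e).2) ∈ p.edges})) :=
    Submodule.mem_map_of_mem h1
  rw [Submodule.map_span] at h2
  refine Submodule.span_mono ?_ h2
  rintro y ⟨z, ⟨e, ⟨heb, hmem⟩, rfl⟩, rfl⟩
  refine ⟨Sum.inl e, hT e heb hmem, ?_⟩
  rw [row0_inl, heb]
  rfl

/-- If the real matrix is nonsingular, each color class is a spanning looped forest. -/
lemma forests_of_det_N0_ne_zero (σ : (V ⊕ V) ≃ (E ⊕ L)) (g : E → Bool)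
    (hdet : Matrix.det ((N0 G color g).submatrix σ id) ≠ 0) :
    ∀ b : Bool, G.IsLoopedForestOn (fun e => g e = b) (fun l => color l = b) := by
  have hU : IsUnit ((N0 G color g).submatrix σ id) :=
    (Matrix.isUnit_iff_isUnit_det _).mpr (isUnit_iff_ne_zero.mpr hdet)
  have hli0 : LinearIndependent ℝ (fun i => ((N0 G color g).submatrix σ id) i) :=
    Matrix.linearIndependent_rows_iff_isUnit.mpr hU
  have hli : LinearIndependent ℝ (row0 G color g) := (linearIndependent_equiv σ).mp hli0
  intro b
  have hexists : ∀ c : (G.subSG fun e => g e = b).ConnectedComponent,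
      ∃ l : L, color l = b ∧
        (G.subSG fun e => g e = b).connectedComponentMk (G.loopAt l) = c := by
    intro c
    by_contra hno
    push_neg at hno
    classical
    obtain ⟨v0, hv0⟩ := c.exists_rep
    set ind : V → ℝ :=
      fun v => if (G.subSG fun e => g e = b).connectedComponentMk v = c then 1 else 0
      with hind
    have hmv : ((N0 G color g).submatrix σ id).mulVec (blockify b ind) = 0 := by
      rw [submatrix_mulVec_eq_zero_iff]
      intro r
      cases r with
      | inl e =>
        have h0 : (∑ c' : V ⊕ V, N0 G color g (Sum.inl e) c' * blockify b ind c')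
            = if g e = b then ∑ v : V, uvec G e v * ind v else 0 :=
          sum_blockify_blockify (g e) b (uvec G e) ind
        rw [h0]
        split_ifs with hgb
        · rw [sum_uvec_mul]
          have hadj := adj_of_edge G (P := fun e => g e = b) hgb
          have hmk := SimpleGraph.ConnectedComponent.connectedComponentMk_eq_of_adj hadj
          rw [hind]
          simp only [hmk]
          ring
        · rfl
      | inr l =>
        have h0 : (∑ c' : V ⊕ V, N0 G color g (Sum.inr l) c' * blockify b ind c')
            = if color l = b then ∑ v : V, chi (G.loopAt l) v * ind v else 0 :=
          sum_blockify_blockify (color l) b (chi (G.loopAt l)) ind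
        rw [h0]
        split_ifs with hcl
        · rw [sum_chi_mul]
          rw [hind]
          simp [hno l hcl]
        · rfl
    have hne0 : blockify b ind ≠ 0 := by
      intro h0
      have h1 : ind v0 = 1 := by
        rw [hind]
        exact if_pos hv0
      cases b
      · have h2 := congr_fun h0 (Sum.inr v0)
        simp only [blockify, Pi.zero_apply] at h2
        rw [h1] at h2
        norm_num at h2
      · have h2 := congr_fun h0 (Sum.inl v0)
        simp only [blockify, Pi.zero_apply] at h2
        rw [h1] at h2
        norm_num at h2
    exact hdet (Matrix.exists_mulVec_eq_zero_iff.mp ⟨blockify b ind, hne0, hmv⟩)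
  refine ⟨?_, ?_, ?_⟩
  · -- injectivity on unordered endpoint pairs
    intro e f he hf hs
    by_contra hef
    rcases uvec_cases G (u := (G.ends f).1) (w := (G.ends f).2) hs with hc | hc
    · have hrow : row0 G color g (Sum.inl e) = row0 G color g (Sum.inl f) := by
        rw [row0_inl, row0_inl, he, hf, hc, ← uvec_chi]
      exact hef (Sum.inl.inj (hli.injective hrow))
    · have hneg : uvec G e = -uvec G f := by
        rw [hc, uvec_chi G f]
        funext v
        simp
      have hrow : row0 G color g (Sum.inl e) = -(row0 G color g (Sum.inl f)) := by
        rw [row0_inl, row0_inl, he, hf, hneg]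
        exact blockify_neg b (uvec G f)
      have hmem : row0 G color g (Sum.inl e)
          ∈ Submodule.span ℝ (row0 G color g '' {Sum.inl f}) := by
        rw [hrow, Set.image_singleton]
        exact Submodule.neg_mem _ (Submodule.mem_span_singleton_self _)
      have hnotmem : (Sum.inl e : E ⊕ L) ∉ ({Sum.inl f} : Set (E ⊕ L)) := by
        simp only [Set.mem_singleton_iff, Sum.inl.injEq]
        exact hef
      exact (hli.notMem_span_image hnotmem) hmem
  · -- acyclicity
    intro v cyc hcyc
    cases cyc with
    | nil => exact SimpleGraph.Walk.IsCycle.not_of_nil hcyc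
    | @cons _ x _ h p =>
      rw [SimpleGraph.Walk.cons_isCycle_iff] at hcyc
      obtain ⟨hpath, hnotmem⟩ := hcyc
      obtain ⟨e0, he0, hs0⟩ := adj_elim G h
      have hT : ∀ e, g e = b → s((G.ends e).1, (G.ends e).2) ∈ p.edges →
          Sum.inl e ∈ (Set.univ \ {Sum.inl e0} : Set (E ⊕ L)) := by
        intro e heb hmem
        refine ⟨trivial, ?_⟩
        simp only [Set.mem_singleton_iff, Sum.inl.injEq]
        intro hee0
        subst hee0
        rw [hs0] at hmem
        exact hnotmem hmem
      have hspan := blockify_walk_span G color g b p (Set.univ \ {Sum.inl e0}) hT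
      have hrowmem : row0 G color g (Sum.inl e0)
          ∈ Submodule.span ℝ (row0 G color g '' (Set.univ \ {Sum.inl e0})) := by
        rcases uvec_cases G hs0 with hc | hc
        · have : row0 G color g (Sum.inl e0)
              = -(blockifyL b (fun v' => chi x v' - chi v v')) := by
            rw [row0_inl, he0, hc]
            rw [show (fun v' => chi v v' - chi x v') = -fun v' => chi x v' - chi v v' by
              funext v'; simp]
            exact blockify_neg b _
          rw [this]
          exact Submodule.neg_mem _ hspan
        · have : row0 G color g (Sum.inl e0)
              = blockifyL b (fun v' => chi x v' - chi v v') := by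
            rw [row0_inl, he0, hc]
            rfl
          rw [this]
          exact hspan
      have hnm : (Sum.inl e0 : E ⊕ L) ∉ (Set.univ \ {Sum.inl e0} : Set (E ⊕ L)) := by
        simp
      exact (hli.notMem_span_image hnm) hrowmem
  · -- exactly one loop per component
    intro c
    rw [Nat.card_eq_one_iff_unique]
    constructor
    · constructor
      rintro ⟨l1, hcol1, hcomp1⟩ ⟨l2, hcol2, hcomp2⟩
      refine Subtype.ext ?_
      by_contra hne12
      have hreach : (G.subSG fun e => g e = b).Reachable (G.loopAt l1) (G.loopAt l2) :=
        SimpleGraph.ConnectedComponent.exact (hcomp1.trans hcomp2.symm)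
      obtain ⟨p⟩ := hreach
      have hspan := blockify_walk_span G color g b p (Set.univ \ {Sum.inr l1})
        (fun e heb _ => ⟨trivial, by simp⟩)
      have hrow1 : row0 G color g (Sum.inr l1) = blockifyL b (chi (G.loopAt l1)) := by
        rw [row0_inr, hcol1]; rfl
      have hrow2 : blockifyL (V := V) b (chi (G.loopAt l2))
          = row0 G color g (Sum.inr l2) := by
        rw [row0_inr, hcol2]; rfl
      have hdecomp : row0 G color g (Sum.inr l1)
          = blockifyL b (fun v => chi (G.loopAt l1) v - chi (G.loopAt l2) v)
            + row0 G color g (Sum.inr l2) := by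
        rw [hrow1, ← hrow2, ← map_add]
        congr 1
        funext v
        simp
      have hmem : row0 G color g (Sum.inr l1)
          ∈ Submodule.span ℝ (row0 G color g '' (Set.univ \ {Sum.inr l1})) := by
        rw [hdecomp]
        refine Submodule.add_mem _ hspan (Submodule.subset_span ?_)
        refine ⟨Sum.inr l2, ⟨trivial, ?_⟩, rfl⟩
        simp only [Set.mem_singleton_iff, Sum.inr.injEq]
        intro h
        exact hne12 h.symm
      have hnm : (Sum.inr l1 : E ⊕ L) ∉ (Set.univ \ {Sum.inr l1} : Set (E ⊕ L)) := by
        simp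
      exact (hli.notMem_span_image hnm) hmem
    · obtain ⟨l, hl1, hl2⟩ := hexists c
      exact ⟨⟨l, hl1, hl2⟩⟩

end RealMatrix

section PolyMatrix

open MvPolynomial

variable [DecidableEq E] [DecidableEq L] (G : LGraph V E L) (color : L → Bool)

lemma matP_some (g : E → Bool) :
    matP G color (fun e => some (g e))
      = (N0 G color g).map ⇑(MvPolynomial.C : ℝ →+* Rg E) := by
  ext r c
  cases r <;> rfl

lemma matP_update (f : E → Option Bool) (e : E) (b : Bool) :
    matP G color (Function.update f e (some b)) =
      Matrix.updateRow (matP G color f) (Sum.inl e)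
        (fun c => MvPolynomial.C (blockify b (uvec G e) c)) := by
  refine Matrix.ext fun r c => ?_
  rcases r with e' | l
  · by_cases he : e' = e
    · subst he
      rw [Matrix.updateRow_self]
      show (match Function.update f e' (some b) e' with
        | none => X (Sum.inl e') * C (blockify true (uvec G e') c)
            + X (Sum.inr e') * C (blockify false (uvec G e') c)
        | some b' => C (blockify b' (uvec G e') c)) = _
      rw [Function.update_self]
    · rw [Matrix.updateRow_ne (by simp [he])]
      show (match Function.update f e (some b) e' with
        | none => X (Sum.inl e') * C (blockify true (uvec G e') c)
            + X (Sum.inr e') * C (blockify false (uvec G e') c)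
        | some b' => C (blockify b' (uvec G e') c)) = _
      rw [Function.update_of_ne he]
      rfl
  · rw [Matrix.updateRow_ne (by simp)]
    rfl

lemma submatrix_updateRow {α : Type*} (A : Matrix (E ⊕ L) (V ⊕ V) α)
    (σ : (V ⊕ V) ≃ (E ⊕ L)) (r0 : E ⊕ L) (v : (V ⊕ V) → α) :
    (Matrix.updateRow A r0 v).submatrix σ id
      = Matrix.updateRow (A.submatrix σ id) (σ.symm r0) v := by
  ext i c
  by_cases h : i = σ.symm r0
  · subst h
    simp [Matrix.updateRow_apply, Matrix.submatrix_apply]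
  · have h2 : σ i ≠ r0 := fun h' => h (by rw [← h']; exact (σ.symm_apply_apply i).symm)
    simp [Matrix.updateRow_apply, Matrix.submatrix_apply, h, h2]

lemma det_matP_expand (σ : (V ⊕ V) ≃ (E ⊕ L)) (f : E → Option Bool) (e : E)
    (hfe : f e = none) :
    Matrix.det ((matP G color f).submatrix σ id)
      = X (Sum.inl e) *
          Matrix.det ((matP G color (Function.update f e (some true))).submatrix σ id)
        + X (Sum.inr e) *
          Matrix.det ((matP G color (Function.update f e (some false))).submatrix σ id) := by
  have hsub : ∀ b : Bool,
      (matP G color (Function.update f e (some b))).submatrix σ id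
        = Matrix.updateRow ((matP G color f).submatrix σ id) (σ.symm (Sum.inl e))
            (fun c => MvPolynomial.C (blockify b (uvec G e) c)) := by
    intro b
    rw [matP_update, submatrix_updateRow]
  rw [hsub true, hsub false]
  set A := (matP G color f).submatrix σ id with hA
  have hrow : A (σ.symm (Sum.inl e)) = fun c =>
      X (Sum.inl e) * MvPolynomial.C (blockify true (uvec G e) c)
        + X (Sum.inr e) * MvPolynomial.C (blockify false (uvec G e) c) := by
    funext c
    show matP G color f (σ (σ.symm (Sum.inl e))) c = _
    rw [Equiv.apply_symm_apply]
    show (match f e with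
      | none => X (Sum.inl e) * C (blockify true (uvec G e) c)
          + X (Sum.inr e) * C (blockify false (uvec G e) c)
      | some b' => C (blockify b' (uvec G e) c)) = _
    rw [hfe]
  have hself : A = Matrix.updateRow A (σ.symm (Sum.inl e)) (A (σ.symm (Sum.inl e))) :=
    (Matrix.updateRow_eq_self _ _).symm
  conv_lhs => rw [hself, hrow]
  have hsum : (fun c =>
      X (Sum.inl e) * MvPolynomial.C (blockify true (uvec G e) c)
        + X (Sum.inr e) * MvPolynomial.C (blockify false (uvec G e) c))
      = (X (Sum.inl e) : Rg E) • (fun c => MvPolynomial.C (blockify true (uvec G e) c))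
        + (X (Sum.inr e) : Rg E) • (fun c => MvPolynomial.C (blockify false (uvec G e) c)) := by
    funext c
    simp [smul_eq_mul]
  rw [hsum, Matrix.det_updateRow_add, Matrix.det_updateRow_smul, Matrix.det_updateRow_smul]

lemma exists_coloring_of_det_ne (σ : (V ⊕ V) ≃ (E ⊕ L)) (s : Finset E) :
    ∀ (f : E → Option Bool), (∀ e ∉ s, f e ≠ none) →
      Matrix.det ((matP G color f).submatrix σ id) ≠ 0 →
      ∃ g : E → Bool, Matrix.det ((N0 G color g).submatrix σ id) ≠ 0 := by
  classical
  induction s using Finset.induction_on with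
  | empty =>
    intro f hf hdet
    refine ⟨fun e => (f e).getD true, ?_⟩
    have heq : matP G color (fun e => some ((f e).getD true)) = matP G color f := by
      have : (fun e => some ((f e).getD true)) = f := by
        funext e
        cases h : f e with
        | none => exact absurd h (hf e (Finset.notMem_empty e))
        | some b => simp [h]
      rw [this]
    intro h0
    apply hdet
    have h1 : (matP G color f).submatrix σ id
        = ((N0 G color (fun e => (f e).getD true)).submatrix σ id).map
            ⇑(MvPolynomial.C : ℝ →+* Rg E) := by
      rw [← heq, matP_some]
      rfl
    rw [h1, ← RingHom.mapMatrix_apply, ← RingHom.map_det, h0, map_zero]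
  | @insert e s he ih =>
    intro f hf hdet
    by_cases hfe : f e = none
    · rw [det_matP_expand G color σ f e hfe] at hdet
      have hor : Matrix.det ((matP G color (Function.update f e (some true))).submatrix σ id) ≠ 0
          ∨ Matrix.det ((matP G color (Function.update f e (some false))).submatrix σ id) ≠ 0 := by
        by_contra hc
        push_neg at hc
        rw [hc.1, hc.2] at hdet
        simp at hdet
      have hupd : ∀ b : Bool, ∀ e' ∉ s, Function.update f e (some b) e' ≠ none := by
        intro b e' he'
        by_cases hee : e' = e
        · subst hee
          simp [Function.update_self]
        · rw [Function.update_of_ne hee]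
          exact hf e' (by simp [hee, he'])
      rcases hor with h1 | h1
      · exact ih (Function.update f e (some true)) (hupd true) h1
      · exact ih (Function.update f e (some false)) (hupd false) h1
    · refine ih f ?_ hdet
      intro e' he'
      by_cases hee : e' = e
      · subst hee; exact hfe
      · exact hf e' (by simp [hee, he'])

lemma det_matP_none_ne_zero_iff (σ : (V ⊕ V) ≃ (E ⊕ L)) :
    Matrix.det ((matP G color (fun _ => none)).submatrix σ id) ≠ 0 ↔
      ∃ g : E → Bool, ∀ b : Bool,
        G.IsLoopedForestOn (fun e => g e = b) (fun l => color l = b) := by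
  constructor
  · intro hdet
    obtain ⟨g, hg⟩ := exists_coloring_of_det_ne G color σ Finset.univ (fun _ => none)
      (fun e he => absurd (Finset.mem_univ e) he) hdet
    exact ⟨g, forests_of_det_N0_ne_zero G color σ g hg⟩
  · rintro ⟨g, hg⟩
    have hreal := det_N0_ne_zero_of_forests G color σ g hg
    set φ : Rg E →+* ℝ := (MvPolynomial.eval
      (Sum.elim (fun e => if g e then (1 : ℝ) else 0)
        (fun e => if g e then 0 else 1))) with hφ
    have hmap : ((matP G color (fun _ => none)).submatrix σ id).map ⇑φ
        = (N0 G color g).submatrix σ id := by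
      refine Matrix.ext fun i c => ?_
      simp only [Matrix.map_apply, Matrix.submatrix_apply, id_eq]
      cases hσ : σ i with
      | inl e =>
        show φ (X (Sum.inl e) * C (blockify true (uvec G e) c)
            + X (Sum.inr e) * C (blockify false (uvec G e) c))
          = blockify (g e) (uvec G e) c
        rw [_root_.map_add, _root_.map_mul, _root_.map_mul, hφ]
        simp only [MvPolynomial.eval_X, MvPolynomial.eval_C, Sum.elim_inl, Sum.elim_inr]
        cases hb : g e <;> cases c <;> simp [blockify, hb]
      | inr l =>
        show φ (C (loopRow G color l c)) = loopRow G color l c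
        rw [hφ]
        exact MvPolynomial.eval_C _
    intro h0
    apply hreal
    rw [← hmap, ← RingHom.mapMatrix_apply, ← RingHom.map_det, h0, map_zero]

end PolyMatrix

section Bridge

open MvPolynomial

lemma M202c_eq_map (G : LGraph V E L) (color : L → Bool) :
    M202c G color = (matP G color (fun _ => none)).map
      ⇑(algebraMap (Rg E) (EdgeField E)) := by
  refine Matrix.ext fun r c => ?_
  rcases r with e | l
  · have hrhs : (matP G color (fun _ => none)).map
        (⇑(algebraMap (Rg E) (EdgeField E))) (Sum.inl e) c
        = algebraMap (Rg E) (EdgeField E)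
            (X (Sum.inl e) * C (blockify true (uvec G e) c)
              + X (Sum.inr e) * C (blockify false (uvec G e) c)) := rfl
    rw [hrhs, _root_.map_add, _root_.map_mul, _root_.map_mul]
    have hXa : algebraMap (Rg E) (EdgeField E) (X (Sum.inl e)) = edgeVar E (Sum.inl e) := rfl
    have hXb : algebraMap (Rg E) (EdgeField E) (X (Sum.inr e)) = edgeVar E (Sum.inr e) := rfl
    rw [hXa, hXb]
    rcases c with v | v
    · show (if v = (G.ends e).1 then edgeVar E (Sum.inl e)
        else if v = (G.ends e).2 then -edgeVar E (Sum.inl e) else 0) = _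
      have h1 : blockify true (uvec G e) (Sum.inl v) = uvec G e v := rfl
      have h2 : blockify false (uvec G e) (Sum.inl v) = 0 := rfl
      rw [h1, h2]
      simp only [_root_.map_zero, mul_zero, add_zero]
      unfold uvec
      split_ifs <;> simp
    · show (if v = (G.ends e).1 then edgeVar E (Sum.inr e)
        else if v = (G.ends e).2 then -edgeVar E (Sum.inr e) else 0) = _
      have h1 : blockify true (uvec G e) (Sum.inr v) = 0 := rfl
      have h2 : blockify false (uvec G e) (Sum.inr v) = uvec G e v := rfl
      rw [h1, h2]
      simp only [_root_.map_zero, mul_zero, zero_add]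
      unfold uvec
      split_ifs <;> simp
  · have hrhs : (matP G color (fun _ => none)).map
        (⇑(algebraMap (Rg E) (EdgeField E))) (Sum.inr l) c
        = algebraMap (Rg E) (EdgeField E) (C (loopRow G color l c)) := rfl
    rw [hrhs]
    rcases c with v | v
    · show (if v = G.loopAt l ∧ color l = true then (1 : EdgeField E) else 0) = _
      have h1 : loopRow G color l (Sum.inl v)
          = if color l then chi (G.loopAt l) v else 0 := rfl
      rw [h1]
      cases hb : color l
      · by_cases hv : v = G.loopAt l <;> simp [chi, hv]
      · by_cases hv : v = G.loopAt l <;> simp [chi, hv]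
    · show (if v = G.loopAt l ∧ color l = false then (1 : EdgeField E) else 0) = _
      have h1 : loopRow G color l (Sum.inr v)
          = if color l then 0 else chi (G.loopAt l) v := rfl
      rw [h1]
      cases hb : color l
      · by_cases hv : v = G.loopAt l <;> simp [chi, hv]
      · by_cases hv : v = G.loopAt l <;> simp [chi, hv]

end Bridge

section RankLemmas

variable {K : Type*} [Field K]

lemma rank_submatrix_equiv (A : Matrix (E ⊕ L) (V ⊕ V) K) (σ : (V ⊕ V) ≃ (E ⊕ L)) :
    (A.submatrix (⇑σ) id).rank = A.rank := by
  have h0 : A.submatrix (⇑σ) id = A.submatrix (⇑σ) ⇑(Equiv.refl (V ⊕ V)) := by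
    rw [Equiv.coe_refl]
  rw [h0, Matrix.rank, Matrix.rank, Matrix.mulVecLin_submatrix, LinearMap.range_comp,
    LinearMap.range_comp,
    show LinearMap.funLeft K K ⇑(Equiv.refl (V ⊕ V)).symm
      = (LinearEquiv.funCongrLeft K K (Equiv.refl (V ⊕ V)).symm : _ →ₗ[K] _) from rfl,
    show LinearMap.funLeft K K ⇑σ
      = (LinearEquiv.funCongrLeft K K σ : _ →ₗ[K] _) from rfl,
    LinearEquiv.range, Submodule.map_top, LinearEquiv.finrank_map_eq]

lemma rank_eq_card_iff_det_ne (B : Matrix (V ⊕ V) (V ⊕ V) K) :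
    B.rank = Fintype.card (V ⊕ V) ↔ B.det ≠ 0 := by
  constructor
  · intro h hdet0
    obtain ⟨x, hx0, hxv⟩ := Matrix.exists_mulVec_eq_zero_iff.mpr hdet0
    have hcard := LinearMap.finrank_range_add_finrank_ker B.mulVecLin
    rw [Module.finrank_fintype_fun_eq_card] at hcard
    have hker : LinearMap.ker B.mulVecLin ≠ ⊥ := by
      intro hbot
      apply hx0
      have hx : x ∈ LinearMap.ker B.mulVecLin := by
        rw [LinearMap.mem_ker, Matrix.mulVecLin_apply]
        exact hxv
      rw [hbot] at hx
      simpa using hx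
    have hpos : 0 < Module.finrank K (LinearMap.ker B.mulVecLin) := by
      rcases Nat.eq_zero_or_pos (Module.finrank K (LinearMap.ker B.mulVecLin)) with h0 | h0
      · exact absurd (Submodule.finrank_eq_zero.mp h0) hker
      · exact h0
    rw [Matrix.rank] at h
    omega
  · intro hdet
    exact Matrix.rank_of_isUnit _
      ((Matrix.isUnit_iff_isUnit_det _).mpr (isUnit_iff_ne_zero.mpr hdet))

end RankLemmas

section Counting

/-- functions vanishing on columns outside `S` -/
def vanishOutside (K : Type*) [Field K] (S : Finset V) : Submodule K ((V ⊕ V) → K) where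
  carrier := {h | ∀ v : V, v ∉ S → h (Sum.inl v) = 0 ∧ h (Sum.inr v) = 0}
  add_mem' := by
    intro a b ha hb v hv
    constructor
    · show a (Sum.inl v) + b (Sum.inl v) = 0
      rw [(ha v hv).1, (hb v hv).1, add_zero]
    · show a (Sum.inr v) + b (Sum.inr v) = 0
      rw [(ha v hv).2, (hb v hv).2, add_zero]
  zero_mem' := fun v _ => ⟨rfl, rfl⟩
  smul_mem' := by
    intro t a ha v hv
    constructor
    · show t * a (Sum.inl v) = 0
      rw [(ha v hv).1, mul_zero]
    · show t * a (Sum.inr v) = 0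
      rw [(ha v hv).2, mul_zero]

/-- functions vanishing outside `S` whose two halves both sum to zero -/
def goodSub (K : Type*) [Field K] (S : Finset V) : Submodule K ((V ⊕ V) → K) where
  carrier := {h | (∀ v : V, v ∉ S → h (Sum.inl v) = 0 ∧ h (Sum.inr v) = 0) ∧
      (∑ v : V, h (Sum.inl v)) = 0 ∧ (∑ v : V, h (Sum.inr v)) = 0}
  add_mem' := by
    rintro a b ⟨ha1, ha2, ha3⟩ ⟨hb1, hb2, hb3⟩
    refine ⟨fun v hv => ?_, ?_, ?_⟩
    · constructor
      · show a (Sum.inl v) + b (Sum.inl v) = 0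
        rw [(ha1 v hv).1, (hb1 v hv).1, add_zero]
      · show a (Sum.inr v) + b (Sum.inr v) = 0
        rw [(ha1 v hv).2, (hb1 v hv).2, add_zero]
    · show (∑ v : V, (a (Sum.inl v) + b (Sum.inl v))) = 0
      rw [Finset.sum_add_distrib, ha2, hb2, add_zero]
    · show (∑ v : V, (a (Sum.inr v) + b (Sum.inr v))) = 0
      rw [Finset.sum_add_distrib, ha3, hb3, add_zero]
  zero_mem' := ⟨fun v _ => ⟨rfl, rfl⟩, by simp, by simp⟩
  smul_mem' := by
    rintro t a ⟨ha1, ha2, ha3⟩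
    refine ⟨fun v hv => ?_, ?_, ?_⟩
    · constructor
      · show t * a (Sum.inl v) = 0
        rw [(ha1 v hv).1, mul_zero]
      · show t * a (Sum.inr v) = 0
        rw [(ha1 v hv).2, mul_zero]
    · show (∑ v : V, t * a (Sum.inl v)) = 0
      rw [← Finset.mul_sum, ha2, mul_zero]
    · show (∑ v : V, t * a (Sum.inr v)) = 0
      rw [← Finset.mul_sum, ha3, mul_zero]

variable (G : LGraph V E L) (color : L → Bool)

lemma edge_row_mem {S : Finset V} {e : E}
    (h1 : (G.ends e).1 ∈ S) (h2 : (G.ends e).2 ∈ S) :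
    M202c G color (Sum.inl e) ∈ goodSub (EdgeField E) S := by
  refine ⟨fun v hv => ?_, ?_, ?_⟩
  · constructor
    · show (if v = (G.ends e).1 then edgeVar E (Sum.inl e)
        else if v = (G.ends e).2 then -edgeVar E (Sum.inl e) else 0) = 0
      rw [if_neg (fun hvi : v = (G.ends e).1 => hv (hvi ▸ h1)),
        if_neg (fun hvj : v = (G.ends e).2 => hv (hvj ▸ h2))]
    · show (if v = (G.ends e).1 then edgeVar E (Sum.inr e)
        else if v = (G.ends e).2 then -edgeVar E (Sum.inr e) else 0) = 0
      rw [if_neg (fun hvi : v = (G.ends e).1 => hv (hvi ▸ h1)),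
        if_neg (fun hvj : v = (G.ends e).2 => hv (hvj ▸ h2))]
  · have hp : ∀ v : V, M202c G color (Sum.inl e) (Sum.inl v)
        = (if v = (G.ends e).1 then edgeVar E (Sum.inl e)
          else if v = (G.ends e).2 then -edgeVar E (Sum.inl e) else 0) := fun _ => rfl
    rw [Finset.sum_congr rfl fun v _ => hp v, sum_ite_pair (G.ne e), add_neg_cancel]
  · have hp : ∀ v : V, M202c G color (Sum.inl e) (Sum.inr v)
        = (if v = (G.ends e).1 then edgeVar E (Sum.inr e)
          else if v = (G.ends e).2 then -edgeVar E (Sum.inr e) else 0) := fun _ => rfl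
    rw [Finset.sum_congr rfl fun v _ => hp v, sum_ite_pair (G.ne e), add_neg_cancel]

lemma loop_row_mem {S : Finset V} {l : L} (h1 : G.loopAt l ∈ S) :
    M202c G color (Sum.inr l) ∈ vanishOutside (EdgeField E) S := by
  intro v hv
  constructor
  · show (if v = G.loopAt l ∧ color l = true then (1 : EdgeField E) else 0) = 0
    rw [if_neg (fun hc : v = G.loopAt l ∧ color l = true => hv (hc.1 ▸ h1))]
  · show (if v = G.loopAt l ∧ color l = false then (1 : EdgeField E) else 0) = 0
    rw [if_neg (fun hc : v = G.loopAt l ∧ color l = false => hv (hc.1 ▸ h1))]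

lemma count2 (hli : LinearIndependent (EdgeField E) (fun r : E ⊕ L => M202c G color r))
    (S : Finset V) : G.edgeCount S + G.loopCount S ≤ 2 * S.card := by
  classical
  set K := EdgeField E with hK
  set ι := ({e : E // (G.ends e).1 ∈ S ∧ (G.ends e).2 ∈ S} ⊕ {l : L // G.loopAt l ∈ S})
    with hι
  set j : ι → E ⊕ L := Sum.elim (fun e => Sum.inl e.1) (fun l => Sum.inr l.1) with hj
  have hjinj : Function.Injective j := by
    rintro (a | a) (b | b) h
    · simp only [hj, Sum.elim_inl, Sum.inl.injEq] at h
      exact congrArg Sum.inl (Subtype.ext h)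
    · simp [hj] at h
    · simp [hj] at h
    · simp only [hj, Sum.elim_inr, Sum.inr.injEq] at h
      exact congrArg Sum.inr (Subtype.ext h)
  have hsub : LinearIndependent K (fun t : ι => M202c G color (j t)) := hli.comp j hjinj
  set D := {v : V // v ∈ S} with hD
  set ε : D ⊕ D → V ⊕ V := Sum.map Subtype.val Subtype.val with hε
  set π : ((V ⊕ V) → K) →ₗ[K] ((D ⊕ D) → K) := LinearMap.funLeft K K ε with hπ
  have hrowmem : ∀ t : ι, M202c G color (j t) ∈ vanishOutside K S := by
    rintro (e | l)
    · exact fun v hv => ((edge_row_mem G color e.2.1 e.2.2).1 v hv)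
    · exact loop_row_mem G color l.2
  have hdisj : Disjoint
      (Submodule.span K (Set.range fun t : ι => M202c G color (j t)))
      (LinearMap.ker π) := by
    rw [Submodule.disjoint_def]
    intro h hmem hker
    have hv : h ∈ vanishOutside K S := by
      refine Submodule.span_le.mpr ?_ hmem
      rintro _ ⟨t, rfl⟩
      exact hrowmem t
    have hkfun : ∀ d : D ⊕ D, h (ε d) = 0 := fun d =>
      congr_fun (LinearMap.mem_ker.mp hker) d
    funext c
    cases c with
    | inl v =>
      by_cases hvS : v ∈ S
      · exact hkfun (Sum.inl ⟨v, hvS⟩)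
      · exact (hv v hvS).1
    | inr v =>
      by_cases hvS : v ∈ S
      · exact hkfun (Sum.inr ⟨v, hvS⟩)
      · exact (hv v hvS).2
  have hmi : LinearIndependent K (⇑π ∘ fun t : ι => M202c G color (j t)) :=
    hsub.map hdisj
  have hcard := hmi.fintype_card_le_finrank
  rw [Module.finrank_fintype_fun_eq_card] at hcard
  rw [Fintype.card_sum, Fintype.card_sum] at hcard
  have hDcard : Fintype.card D = S.card := Fintype.card_coe S
  rw [LGraph.edgeCount, LGraph.loopCount, Nat.card_eq_fintype_card, Nat.card_eq_fintype_card]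
  omega

lemma count1 (hli : LinearIndependent (EdgeField E) (fun r : E ⊕ L => M202c G color r))
    (S : Finset V) : G.edgeCount S ≤ 2 * S.card - 2 := by
  classical
  rcases Finset.eq_empty_or_nonempty S with rfl | ⟨v0, hv0⟩
  · have hemp : IsEmpty {e : E // (G.ends e).1 ∈ (∅ : Finset V) ∧ (G.ends e).2 ∈ (∅ : Finset V)} :=
      ⟨fun e => by simpa using e.2⟩
    haveI := hemp
    rw [LGraph.edgeCount, Nat.card_of_isEmpty]
    exact Nat.zero_le _
  · set K := EdgeField E with hK
    set ι := {e : E // (G.ends e).1 ∈ S ∧ (G.ends e).2 ∈ S} with hι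
    set j : ι → E ⊕ L := fun e => Sum.inl e.1 with hj
    have hjinj : Function.Injective j := by
      intro a b h
      simp only [hj, Sum.inl.injEq] at h
      exact Subtype.ext h
    have hsub : LinearIndependent K (fun t : ι => M202c G color (j t)) := hli.comp j hjinj
    set D := {v : V // v ∈ S.erase v0} with hD
    set ε : D ⊕ D → V ⊕ V := Sum.map Subtype.val Subtype.val with hε
    set π : ((V ⊕ V) → K) →ₗ[K] ((D ⊕ D) → K) := LinearMap.funLeft K K ε with hπ
    have hrowmem : ∀ t : ι, M202c G color (j t) ∈ goodSub K S := fun t =>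
      edge_row_mem G color t.2.1 t.2.2
    have hdisj : Disjoint
        (Submodule.span K (Set.range fun t : ι => M202c G color (j t)))
        (LinearMap.ker π) := by
      rw [Submodule.disjoint_def]
      intro h hmem hker
      have hv : h ∈ goodSub K S := by
        refine Submodule.span_le.mpr ?_ hmem
        rintro _ ⟨t, rfl⟩
        exact hrowmem t
      have hkfun : ∀ d : D ⊕ D, h (ε d) = 0 := fun d =>
        congr_fun (LinearMap.mem_ker.mp hker) d
      have hvanish : ∀ v : V, v ≠ v0 → h (Sum.inl v) = 0 ∧ h (Sum.inr v) = 0 := by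
        intro v hvne
        by_cases hvS : v ∈ S
        · have hmem' : v ∈ S.erase v0 := Finset.mem_erase.mpr ⟨hvne, hvS⟩
          exact ⟨hkfun (Sum.inl ⟨v, hmem'⟩), hkfun (Sum.inr ⟨v, hmem'⟩)⟩
        · exact hv.1 v hvS
      have hv0l : h (Sum.inl v0) = 0 := by
        have hsum : (∑ v : V, h (Sum.inl v)) = h (Sum.inl v0) :=
          Finset.sum_eq_single v0 (fun b _ hb => (hvanish b hb).1)
            (fun hb => absurd (Finset.mem_univ v0) hb)
        rw [← hsum]
        exact hv.2.1
      have hv0r : h (Sum.inr v0) = 0 := by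
        have hsum : (∑ v : V, h (Sum.inr v)) = h (Sum.inr v0) :=
          Finset.sum_eq_single v0 (fun b _ hb => (hvanish b hb).2)
            (fun hb => absurd (Finset.mem_univ v0) hb)
        rw [← hsum]
        exact hv.2.2
      funext c
      cases c with
      | inl v =>
        by_cases hvv : v = v0
        · rw [hvv]; exact hv0l
        · exact (hvanish v hvv).1
      | inr v =>
        by_cases hvv : v = v0
        · rw [hvv]; exact hv0r
        · exact (hvanish v hvv).2
    have hmi : LinearIndependent K (⇑π ∘ fun t : ι => M202c G color (j t)) :=
      hsub.map hdisj
    have hcard := hmi.fintype_card_le_finrank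
    rw [Module.finrank_fintype_fun_eq_card] at hcard
    rw [Fintype.card_sum] at hcard
    have hDcard : Fintype.card D = (S.erase v0).card := Fintype.card_coe _
    have hecard : (S.erase v0).card = S.card - 1 := Finset.card_erase_of_mem hv0
    have hpos : 0 < S.card := Finset.card_pos.mpr ⟨v0, hv0⟩
    rw [LGraph.edgeCount]
    rw [← Nat.card_eq_fintype_card] at hcard
    rw [hι] at hcard
    omega

end Counting

end M202Aux

/-- **`M^c_{2,0,2}` detects the color-looped-(2,2) property.** -/
theorem M202c_rank_iff_colorLooped22
    {V E L : Type} [Fintype V] [Fintype E] [Fintype L] [DecidableEq V]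
    (G : LGraph V E L) (color : L → Bool)
    (hmc : Fintype.card E + Fintype.card L = 2 * Fintype.card V) :
    (M202c G color).rank = 2 * Fintype.card V ↔ G.IsColorLooped22 color := by
  classical
  have hcards : Fintype.card (V ⊕ V) = Fintype.card (E ⊕ L) := by
    rw [Fintype.card_sum, Fintype.card_sum]
    omega
  set σ : (V ⊕ V) ≃ (E ⊕ L) := Fintype.equivOfCardEq hcards with hσ
  have hVV : Fintype.card (V ⊕ V) = 2 * Fintype.card V := by
    rw [Fintype.card_sum]
    ring
  set Msq := (M202c G color).submatrix (⇑σ) id with hMsq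
  have hrank : (M202c G color).rank = 2 * Fintype.card V ↔ Msq.det ≠ 0 := by
    rw [← M202Aux.rank_submatrix_equiv (M202c G color) σ, ← hVV]
    exact M202Aux.rank_eq_card_iff_det_ne Msq
  have hM : Msq = ((M202Aux.matP G color (fun _ => none)).submatrix (⇑σ) id).map
      ⇑(algebraMap (M202Aux.Rg E) (EdgeField E)) := by
    rw [hMsq, M202Aux.M202c_eq_map G color]
    rfl
  have hinj : Function.Injective ⇑(algebraMap (M202Aux.Rg E) (EdgeField E)) :=
    IsFractionRing.injective _ _
  have hdet_iff : Msq.det ≠ 0 ↔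
      Matrix.det ((M202Aux.matP G color fun _ => none).submatrix (⇑σ) id) ≠ 0 := by
    rw [hM, ← RingHom.mapMatrix_apply, ← RingHom.map_det]
    exact map_ne_zero_iff _ hinj
  have main : Msq.det ≠ 0 ↔ ∃ g : E → Bool, ∀ b : Bool,
      G.IsLoopedForestOn (fun e => g e = b) (fun l => color l = b) :=
    hdet_iff.trans (M202Aux.det_matP_none_ne_zero_iff G color σ)
  constructor
  · intro h
    have hdet := hrank.mp h
    have hforest := main.mp hdet
    have hU : IsUnit Msq :=
      (Matrix.isUnit_iff_isUnit_det _).mpr (isUnit_iff_ne_zero.mpr hdet)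
    have hli0 : LinearIndependent (EdgeField E) (fun i => Msq i) :=
      Matrix.linearIndependent_rows_iff_isUnit.mpr hU
    have hli : LinearIndependent (EdgeField E) (fun r : E ⊕ L => M202c G color r) :=
      (linearIndependent_equiv σ).mp hli0
    exact ⟨⟨M202Aux.count1 G color hli, M202Aux.count2 G color hli, hmc⟩, hforest⟩
  · rintro ⟨h22, g, hg⟩
    exact hrank.mpr (main.mpr ⟨g, hg⟩)
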